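/- Let l1, l2 ≥ 1 be integers. In the ring ℚ[[s₁,…,s_{l1}, t₁,…,t_{l2}, x, y]] of formal power series over ℚ, there exists exactly one family (R^{k,l}) indexed by k ∈ {1,…,l1}, l ∈ {1,…,l2} of power series satisfying, for all k and l, the equation R^{k,l} = 1 + s_k·t_l·x·y · ∏_{k' ≠ k} ∏_{l' ≠ l} R^{k',l'}. -/

import Mathlib

open MvPowerSeries Finset

namespace CentralSlopeAux

variable {σ : Type*}

def deg (d : σ →₀ ℕ) : ℕ := d.sum fun _ n => n

lemma deg_add (p q : σ →₀ ℕ) : deg (p + q) = deg p + deg q :=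
  Finsupp.sum_add_index' (fun _ => rfl) (fun _ _ _ => rfl)

lemma eq_zero_of_deg_eq_zero {d : σ →₀ ℕ} (h : deg d = 0) : d = 0 := by
  ext i
  by_cases hi : i ∈ d.support
  · have := Finset.sum_eq_zero_iff.mp h i hi
    simpa using this
  · simpa using Finsupp.notMem_support_iff.mp hi

def Agree (n : ℕ) (P Q : MvPowerSeries σ ℚ) : Prop :=
  ∀ d : σ →₀ ℕ, deg d < n → coeff d P = coeff d Q

lemma Agree.mono {n m : ℕ} (h : m ≤ n) {P Q : MvPowerSeries σ ℚ}
    (hpq : Agree n P Q) : Agree m P Q := fun d hd => hpq d (lt_of_lt_of_le hd h)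

lemma Agree.refl (n : ℕ) (P : MvPowerSeries σ ℚ) : Agree n P P := fun _ _ => rfl

lemma Agree.mul {n : ℕ} {P P' Q Q' : MvPowerSeries σ ℚ}
    (h1 : Agree n P P') (h2 : Agree n Q Q') : Agree n (P * Q) (P' * Q') := by
  classical
  intro d hd
  rw [coeff_mul, coeff_mul]
  refine Finset.sum_congr rfl fun p hp => ?_
  rw [Finset.HasAntidiagonal.mem_antidiagonal] at hp
  have hdd : deg p.1 + deg p.2 = deg d := by rw [← deg_add, hp]
  rw [h1 p.1 (by omega), h2 p.2 (by omega)]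

lemma Agree.prod {n : ℕ} {ι : Type*} (s : Finset ι) (f g : ι → MvPowerSeries σ ℚ)
    (h : ∀ i ∈ s, Agree n (f i) (g i)) :
    Agree n (∏ i ∈ s, f i) (∏ i ∈ s, g i) := by
  classical
  induction s using Finset.induction_on with
  | empty => simpa using Agree.refl n 1
  | @insert a s' hx ih =>
    rw [Finset.prod_insert hx, Finset.prod_insert hx]
    exact (h a (Finset.mem_insert_self a s')).mul
      (ih fun i hi => h i (Finset.mem_insert_of_mem hi))

lemma Agree.shift {n : ℕ} {M P Q : MvPowerSeries σ ℚ}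
    (hM : constantCoeff M = 0) (h : Agree n P Q) :
    Agree (n + 1) (M * P) (M * Q) := by
  classical
  intro d hd
  rw [coeff_mul, coeff_mul]
  refine Finset.sum_congr rfl fun p hp => ?_
  rw [Finset.HasAntidiagonal.mem_antidiagonal] at hp
  have hdd : deg p.1 + deg p.2 = deg d := by rw [← deg_add, hp]
  by_cases h0 : deg p.1 = 0
  · have hp1 : p.1 = 0 := eq_zero_of_deg_eq_zero h0
    rw [hp1, coeff_zero_eq_constantCoeff, hM, zero_mul, zero_mul]
  · rw [h p.2 (by omega)]

lemma Agree.add {n : ℕ} {P P' Q Q' : MvPowerSeries σ ℚ}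
    (h1 : Agree n P P') (h2 : Agree n Q Q') : Agree n (P + Q) (P' + Q') := by
  intro d hd
  rw [map_add, map_add, h1 d hd, h2 d hd]

end CentralSlopeAux

open CentralSlopeAux

section Main

variable {l1 l2 : ℕ}

noncomputable def Mkl (k : Fin l1) (l : Fin l2) :
    MvPowerSeries (Fin l1 ⊕ Fin l2 ⊕ Fin 2) ℚ :=
  X (Sum.inl k) * X (Sum.inr (Sum.inl l)) * X (Sum.inr (Sum.inr 0)) *
    X (Sum.inr (Sum.inr 1))

lemma constantCoeff_Mkl (k : Fin l1) (l : Fin l2) :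
    constantCoeff (Mkl k l) = 0 := by
  simp [Mkl, map_mul]

noncomputable def Phi (R : Fin l1 → Fin l2 → MvPowerSeries (Fin l1 ⊕ Fin l2 ⊕ Fin 2) ℚ) :
    Fin l1 → Fin l2 → MvPowerSeries (Fin l1 ⊕ Fin l2 ⊕ Fin 2) ℚ :=
  fun k l => 1 + Mkl k l *
    ∏ k' ∈ Finset.univ.erase k, ∏ l' ∈ Finset.univ.erase l, R k' l'

lemma Phi_agree {n : ℕ} {R R' : Fin l1 → Fin l2 → MvPowerSeries (Fin l1 ⊕ Fin l2 ⊕ Fin 2) ℚ}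
    (h : ∀ k l, Agree n (R k l) (R' k l)) :
    ∀ k l, Agree (n + 1) (Phi R k l) (Phi R' k l) := by
  intro k l
  refine (Agree.refl _ 1).add ?_
  refine Agree.shift (constantCoeff_Mkl k l) ?_
  exact Agree.prod _ _ _ fun k' _ => Agree.prod _ _ _ fun l' _ => h k' l'

end Main

theorem central_slope_system_unique (l1 l2 : ℕ) (hl1 : 1 ≤ l1) (hl2 : 1 ≤ l2)
    (s : Fin l1 → MvPowerSeries (Fin l1 ⊕ Fin l2 ⊕ Fin 2) ℚ)
    (t : Fin l2 → MvPowerSeries (Fin l1 ⊕ Fin l2 ⊕ Fin 2) ℚ)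
    (x y : MvPowerSeries (Fin l1 ⊕ Fin l2 ⊕ Fin 2) ℚ)
    (hs : s = fun k => MvPowerSeries.X (Sum.inl k))
    (ht : t = fun l => MvPowerSeries.X (Sum.inr (Sum.inl l)))
    (hx : x = MvPowerSeries.X (Sum.inr (Sum.inr 0)))
    (hy : y = MvPowerSeries.X (Sum.inr (Sum.inr 1))) :
    ∃! R : Fin l1 → Fin l2 → MvPowerSeries (Fin l1 ⊕ Fin l2 ⊕ Fin 2) ℚ,
      ∀ (k : Fin l1) (l : Fin l2),
        R k l = 1 + s k * t l * x * y *
          ∏ k' ∈ Finset.univ.erase k, ∏ l' ∈ Finset.univ.erase l, R k' l' := by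
  subst hs ht hx hy
  have key : ∀ (R : Fin l1 → Fin l2 → MvPowerSeries (Fin l1 ⊕ Fin l2 ⊕ Fin 2) ℚ),
      (∀ (k : Fin l1) (l : Fin l2),
        R k l = 1 + (MvPowerSeries.X (Sum.inl k)) * (MvPowerSeries.X (Sum.inr (Sum.inl l))) *
          MvPowerSeries.X (Sum.inr (Sum.inr 0)) * MvPowerSeries.X (Sum.inr (Sum.inr 1)) *
          ∏ k' ∈ Finset.univ.erase k, ∏ l' ∈ Finset.univ.erase l, R k' l') ↔ Phi R = R := by
    intro R
    have phi_eq : ∀ k l, Phi R k l = 1 + (MvPowerSeries.X (Sum.inl k)) *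
        (MvPowerSeries.X (Sum.inr (Sum.inl l))) * MvPowerSeries.X (Sum.inr (Sum.inr 0)) *
        MvPowerSeries.X (Sum.inr (Sum.inr 1)) *
        ∏ k' ∈ Finset.univ.erase k, ∏ l' ∈ Finset.univ.erase l, R k' l' := fun k l => rfl
    constructor
    · intro h; funext k l; rw [phi_eq, ← h k l]
    · intro h k l
      conv_lhs => rw [← h]
      exact phi_eq k l
  -- iteration sequence
  set Rseq : ℕ → Fin l1 → Fin l2 → MvPowerSeries (Fin l1 ⊕ Fin l2 ⊕ Fin 2) ℚ :=
    fun n => Phi^[n] (fun _ _ => 1) with hRseq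
  have stab : ∀ n k l, Agree n (Rseq n k l) (Rseq (n+1) k l) := by
    intro n
    induction n with
    | zero => intro k l d hd; omega
    | succ m ih =>
      intro k l
      have := Phi_agree ih k l
      simpa [hRseq, Function.iterate_succ_apply'] using this
  have stab' : ∀ m n, n ≤ m → ∀ k l, Agree n (Rseq n k l) (Rseq m k l) := by
    intro m
    induction m with
    | zero =>
      intro n hn k l
      have hn0 : n = 0 := by omega
      subst hn0; exact Agree.refl _ _
    | succ p ih =>
      intro n hn k l
      rcases Nat.lt_or_ge n (p+1) with h | h
      · intro d hd
        rw [ih n (by omega) k l d hd]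
        exact stab p k l d (by omega)
      · have : n = p + 1 := by omega
        subst this; exact Agree.refl _ _
  -- limit
  set R : Fin l1 → Fin l2 → MvPowerSeries (Fin l1 ⊕ Fin l2 ⊕ Fin 2) ℚ :=
    fun k l => (fun d => coeff d (Rseq (deg d + 1) k l)) with hR
  have Rcoeff : ∀ k l d, coeff d (R k l) = coeff d (Rseq (deg d + 1) k l) := by
    intro k l d; rfl
  have Ragree : ∀ n k l, Agree n (R k l) (Rseq n k l) := by
    intro n k l d hd
    rw [Rcoeff]
    exact (stab' n (deg d + 1) (by omega) k l) d (by omega)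
  have Rfix : Phi R = R := by
    funext k l
    ext d
    have h1 : Agree (deg d + 1) (Phi R k l) (Phi (Rseq (deg d)) k l) :=
      Phi_agree (fun k' l' => Ragree (deg d) k' l') k l
    have h2 := h1 d (by omega)
    have h3 : Phi (Rseq (deg d)) = Rseq (deg d + 1) := by
      rw [hRseq]; simp [Function.iterate_succ_apply']
    rw [h2, h3, ← Rcoeff]
  beta_reduce
  refine ⟨R, (key R).mpr Rfix, ?_⟩
  intro R' hR'
  have hR'fix : Phi R' = R' := (key R').mp hR'
  have main : ∀ n k l, Agree n (R' k l) (R k l) := by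
    intro n
    induction n with
    | zero => intro k l d hd; omega
    | succ m ih =>
      intro k l
      have := Phi_agree ih k l
      rwa [hR'fix, Rfix] at this
  funext k l
  ext d
  exact main (deg d + 1) k l d (by omega)
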